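/- Let C be a coalgebra, I₁ and I₂ coideals of C, and A a right C-comodule (with A an algebra and Δ_A left A-linear as needed to define coinvariants). If the quotient coalgebras C/I₁ and C/I₂ cogenerate C (i.e. the intersection over all finite multi-indices (i₁,…,i_{n+1}) ∈ {1,2}^{n+1} of the kernels of ℘_{(i)} := (π_{i₁}⊗…⊗π_{i_{n+1}}) ∘ Δ_n is zero), then A^{co C} = A^{co (C/I₁)} ∩ A^{co (C/I₂)}. -/

import Mathlib

open TensorProduct LinearMap Coalgebra

variable {k C : Type} [Field k] [AddCommGroup C] [Module k C] [Coalgebra k C]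

/-- The iterated tensor product `C/I_{i} ⊗ C/I_{i₁} ⊗ … ⊗ C/I_{iₙ}` attached to a
nonempty multi-index `i :: l` with entries in `{1,2}` (encoded by `Bool`). -/
noncomputable def multiTensor (k C : Type) [Field k] [AddCommGroup C] [Module k C]
    (I : Bool → Submodule k C) : Bool → List Bool → ModuleCat k
  | i, [] => ModuleCat.of k (C ⧸ I i)
  | i, j :: l => ModuleCat.of k ((C ⧸ I i) ⊗[k] (multiTensor k C I j l))

/-- The map `℘_{(i)} = (π_{i₁} ⊗ … ⊗ π_{iₙ₊₁}) ∘ Δ_n : C → C/I_{i₁} ⊗ … ⊗ C/I_{iₙ₊₁}`. -/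
noncomputable def multiProj (I : Bool → Submodule k C) :
    (i : Bool) → (l : List Bool) → C →ₗ[k] multiTensor k C I i l
  | i, [] => (I i).mkQ
  | i, j :: l =>
      TensorProduct.map (I i).mkQ (multiProj I j l) ∘ₗ comul (R := k)

section Aux
variable {A M N : Type} [AddCommGroup A] [Module k A]
  [AddCommGroup M] [Module k M] [AddCommGroup N] [Module k N]

/-- Coordinate extraction from a tensor product. -/
noncomputable def coordT {ι : Type} (bA : Module.Basis ι k A) (i : ι) :
    A ⊗[k] M →ₗ[k] M :=
  (TensorProduct.lid k M).toLinearMap ∘ₗ (bA.coord i).rTensor M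

lemma coordT_naturality {ι : Type} (bA : Module.Basis ι k A) (i : ι) (f : M →ₗ[k] N)
    (x : A ⊗[k] M) : coordT bA i (f.lTensor A x) = f (coordT bA i x) := by
  induction x using TensorProduct.induction_on with
  | zero => simp
  | tmul a m => simp [coordT, map_smul]
  | add x y hx hy => simp [map_add, hx, hy]

lemma repr_eq_coordT {ι κ : Type} (bA : Module.Basis ι k A) (bM : Module.Basis κ k M)
    (x : A ⊗[k] M) (i : ι) (j : κ) :
    (bA.tensorProduct bM).repr x (i, j) = bM.repr (coordT bA i x) j := by
  induction x using TensorProduct.induction_on with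
  | zero => simp
  | tmul a m =>
    simp [Module.Basis.tensorProduct_repr_tmul_apply, coordT, Module.Basis.coord_apply, map_smul,
      Finsupp.smul_apply, smul_eq_mul, mul_comm]
  | add x y hx hy => simp [map_add, hx, hy]

lemma eq_zero_of_coordT {ι : Type} (bA : Module.Basis ι k A) (x : A ⊗[k] M)
    (h : ∀ i, coordT (M := M) bA i x = 0) : x = 0 := by
  have bM := Module.Basis.ofVectorSpace k M
  have h0 : (bA.tensorProduct bM).repr x = 0 := by
    ext ⟨i, j⟩
    rw [repr_eq_coordT, h i]
    simp
  simpa using congrArg (bA.tensorProduct bM).repr.symm h0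

/-- `lTensor` and `rTensor` commute elementwise. -/
lemma lTensor_rTensor_comm {P Q : Type} [AddCommGroup P] [Module k P]
    [AddCommGroup Q] [Module k Q]
    (f : A →ₗ[k] P) (g : M →ₗ[k] Q) (x : A ⊗[k] M) :
    g.lTensor P (f.rTensor M x) = f.rTensor Q (g.lTensor A x) := by
  rw [← LinearMap.comp_apply, ← LinearMap.comp_apply,
    lTensor_comp_rTensor, rTensor_comp_lTensor]

end Aux

lemma key_inj {A : Type} [AddCommGroup A] [Module k A]
    (I : Bool → Submodule k C)
    (hcogen : ∀ x : C, (∀ (i : Bool) (l : List Bool), multiProj I i l x = 0) → x = 0)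
    (x : A ⊗[k] C)
    (h : ∀ (i : Bool) (l : List Bool), (multiProj I i l).lTensor A x = 0) : x = 0 := by
  have bA := Module.Basis.ofVectorSpace k A
  refine eq_zero_of_coordT bA x (fun t => ?_)
  refine hcogen _ (fun i l => ?_)
  rw [← coordT_naturality bA t (multiProj I i l) x, h i l, map_zero]

/-- Associativity commutes with a map on the two left factors. -/
lemma assoc_lTensor_map {A Q N : Type} [AddCommGroup A] [Module k A]
    [AddCommGroup Q] [Module k Q] [AddCommGroup N] [Module k N]
    (f : C →ₗ[k] Q) (g : C →ₗ[k] N) :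
    (TensorProduct.map f g).lTensor A ∘ₗ (TensorProduct.assoc k A C C).toLinearMap
      = (TensorProduct.assoc k A Q N).toLinearMap ∘ₗ TensorProduct.map (f.lTensor A) g := by
  apply TensorProduct.ext_threefold
  intro a c c'
  simp

/-- Associativity commutes with a map on the far-left factor. -/
lemma assoc_rTensor_rTensor {A A' Q N : Type} [AddCommGroup A] [Module k A]
    [AddCommGroup A'] [Module k A']
    [AddCommGroup Q] [Module k Q] [AddCommGroup N] [Module k N]
    (f : A →ₗ[k] A') :
    (TensorProduct.assoc k A' Q N).toLinearMap ∘ₗ ((f.rTensor Q).rTensor N)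
      = (f.rTensor (Q ⊗[k] N)) ∘ₗ (TensorProduct.assoc k A Q N).toLinearMap := by
  apply TensorProduct.ext_threefold
  intro a q n
  simp

/-- Proposition 5.2: if the quotient coalgebras `C/I₁` and `C/I₂`
cogenerate `C` (the intersection of the kernels of all the maps `℘_{(i)}` is zero),
then for any algebra `A` and right `C`-comodule structure `ρ` on `A`,
`A^{co C} = A^{co (C/I₁)} ∩ A^{co (C/I₂)}`. -/
theorem coinvariants_of_cogenerating_quotients
    {A : Type} [Ring A] [Algebra k A]
    (I : Bool → Submodule k C)
    (hcoideal : ∀ b : Bool, (∀ x ∈ I b, counit (R := k) x = 0) ∧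
      (∀ x ∈ I b, comul (R := k) x ∈
        LinearMap.range ((I b).subtype.lTensor C)
          ⊔ LinearMap.range ((I b).subtype.rTensor C)))
    (ρ : A →ₗ[k] A ⊗[k] C)
    (hcoassoc : (comul (R := k) (A := C)).lTensor A ∘ₗ ρ
      = (TensorProduct.assoc k A C C).toLinearMap ∘ₗ ρ.rTensor C ∘ₗ ρ)
    (hcounit : (TensorProduct.rid k A).toLinearMap ∘ₗ
        (counit (R := k) (A := C)).lTensor A ∘ₗ ρ = LinearMap.id)
    (hcogen : ∀ x : C, (∀ (i : Bool) (l : List Bool), multiProj I i l x = 0) → x = 0) :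
    {b : A | ∀ a : A, ρ (b * a) = (LinearMap.mulLeft k b).rTensor C (ρ a)}
      = {b : A | ∀ a : A, ((I true).mkQ.lTensor A ∘ₗ ρ) (b * a)
            = (LinearMap.mulLeft k b).rTensor (C ⧸ I true)
                (((I true).mkQ.lTensor A ∘ₗ ρ) a)}
        ∩ {b : A | ∀ a : A, ((I false).mkQ.lTensor A ∘ₗ ρ) (b * a)
            = (LinearMap.mulLeft k b).rTensor (C ⧸ I false)
                (((I false).mkQ.lTensor A ∘ₗ ρ) a)} := by
  ext b
  simp only [Set.mem_setOf_eq, Set.mem_inter_iff, LinearMap.comp_apply]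
  constructor
  · intro hb
    constructor <;> intro a <;> rw [hb a, lTensor_rTensor_comm]
  · rintro ⟨h1, h2⟩ a
    -- combined hypothesis for both quotients
    have hb : ∀ (i : Bool) (a' : A), ((I i).mkQ.lTensor A) (ρ (b * a'))
        = (LinearMap.mulLeft k b).rTensor (C ⧸ I i) (((I i).mkQ.lTensor A) (ρ a')) := by
      intro i
      cases i
      · exact h2
      · exact h1
    -- the key inductive claim
    have claim : ∀ (l : List Bool) (i : Bool) (a' : A),
        (multiProj I i l).lTensor A (ρ (b * a'))
          = (LinearMap.mulLeft k b).rTensor (multiTensor k C I i l)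
              ((multiProj I i l).lTensor A (ρ a')) := by
      intro l
      induction l with
      | nil => intro i a'; exact hb i a'
      | cons j l ih =>
        intro i a'
        set ρi : A →ₗ[k] A ⊗[k] (C ⧸ I i) := (I i).mkQ.lTensor A ∘ₗ ρ with hρi
        have E : (multiProj I i (j :: l)).lTensor A ∘ₗ ρ
            = (TensorProduct.assoc k A (C ⧸ I i) (multiTensor k C I j l)).toLinearMap ∘ₗ
                ρi.rTensor (multiTensor k C I j l) ∘ₗ (multiProj I j l).lTensor A ∘ₗ ρ := by
          show (TensorProduct.map (I i).mkQ (multiProj I j l) ∘ₗ comul (R := k)).lTensor A ∘ₗ ρ = _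
          rw [lTensor_comp, LinearMap.comp_assoc, hcoassoc,
            ← LinearMap.comp_assoc _ (TensorProduct.assoc k A C C).toLinearMap,
            assoc_lTensor_map, LinearMap.comp_assoc,
            ← LinearMap.comp_assoc ρ (ρ.rTensor C), map_comp_rTensor,
            ← rTensor_comp_lTensor, LinearMap.comp_assoc]
        have step1 : ∀ a'' : A,
            (multiProj I i (j :: l)).lTensor A (ρ a'')
              = (TensorProduct.assoc k A (C ⧸ I i) (multiTensor k C I j l)).toLinearMap
                  ((ρi.rTensor (multiTensor k C I j l)) ((multiProj I j l).lTensor A (ρ a''))) := by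
          intro a''
          have := LinearMap.congr_fun E a''
          exact this
        have hmap : ρi ∘ₗ LinearMap.mulLeft k b
            = (LinearMap.mulLeft k b).rTensor (C ⧸ I i) ∘ₗ ρi := by
          ext a''
          exact hb i a''
        refine (step1 (b * a')).trans ?_
        rw [ih j a']
        rw [← LinearMap.comp_apply (ρi.rTensor (multiTensor k C I j l)),
          ← rTensor_comp, hmap, rTensor_comp, LinearMap.comp_apply]
        rw [← LinearMap.comp_apply
            ((TensorProduct.assoc k A (C ⧸ I i) (multiTensor k C I j l)).toLinearMap),
          assoc_rTensor_rTensor, LinearMap.comp_apply]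
        rw [step1 a']
        rfl
    -- conclude via cogeneration
    have h0 : ρ (b * a) - (LinearMap.mulLeft k b).rTensor C (ρ a) = 0 := by
      apply key_inj I hcogen
      intro i l
      rw [map_sub, claim l i a, lTensor_rTensor_comm, sub_self]
    have := sub_eq_zero.mp h0
    simpa using this
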